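/- arXiv:1005.2148 — 2 statements merged into one kernel-verified Lean document; each statement's English description precedes it below -/
import Mathlib

section
/- Any two retracts Ret_a(G,f) and Ret_b(G,f) of a fixed n-ary group (G,f) are isomorphic as groups; in particular the map h(x) = f(e,...,e, x, p̄) (with n−2 copies of e) is an isomorphism from Ret_e(G) to Ret_p(G). -/
namespace NAry

variable {G : Type*} {A : Type*}

/-- One of the ways to compose two applications of an `n`-ary operation on
`2n-1` arguments: the inner application starts at position `i`. -/
def Comp (n : ℕ) (f : (ℕ → G) → G) (x : ℕ → G) (i : ℕ) : G :=
  f (fun k => if k < i then x k else if k = i then f (fun m => x (i + m)) else x (k + n - 1))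

/-- `f` depends only on its first `n` arguments. -/
def DepOn (n : ℕ) (f : (ℕ → G) → G) : Prop :=
  ∀ x y : ℕ → G, (∀ k < n, x k = y k) → f x = f y

/-- Associativity of an `n`-ary operation. -/
def Assoc (n : ℕ) (f : (ℕ → G) → G) : Prop :=
  ∀ (x : ℕ → G) (i j : ℕ), i < n → j < n → Comp n f x i = Comp n f x j

/-- Unique solvability at every place `i < n`. -/
def Solvable (n : ℕ) (f : (ℕ → G) → G) : Prop :=
  ∀ i < n, ∀ (x : ℕ → G) (x₀ : G), ∃! z : G, f (Function.update x i z) = x₀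

/-- `(G, f)` is an `n`-ary (polyadic) group. -/
def IsNAryGroup (n : ℕ) (f : (ℕ → G) → G) : Prop :=
  DepOn n f ∧ Assoc n f ∧ Solvable n f

/-- `sx` is the skew element of `x`: `f(x,…,x,sx) = x` with `n-1` copies of `x`. -/
def IsSkew (n : ℕ) (f : (ℕ → G) → G) (x sx : G) : Prop :=
  f (Function.update (fun _ => x) (n - 1) sx) = x

/-- An action of the `n`-ary group `(G,f)` on a set `A`. -/
def IsAction (n : ℕ) (f : (ℕ → G) → G) (act : G → A → A) : Prop :=
  (∀ (x : ℕ → G) (a : A), act (f x) a = (List.range n).foldr (fun i b => act (x i) b) a)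
  ∧ (∀ a : A, ∃ x : G, act x a = a)
  ∧ (∀ x : G, Function.Bijective (act x))

end NAry

open NAry

section Aux

variable {G : Type*} {n : ℕ} {f : (ℕ → G) → G}

lemma dep_apply (hdep : DepOn n f) {x y : ℕ → G} (h : ∀ k < n, x k = y k) : f x = f y :=
  hdep x y h

lemma cancel_at (hsol : Solvable n f) {i : ℕ} (hi : i < n) (x : ℕ → G) {z w : G}
    (hzw : f (Function.update x i z) = f (Function.update x i w)) : z = w := by
  obtain ⟨u, -, hu⟩ := hsol i hi x (f (Function.update x i w))
  exact (hu z hzw).trans (hu w rfl).symm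

lemma comp_eq (hdep : DepOn n f) (s : ℕ → G) (i : ℕ) (c : G)
    (hc : f (fun m => s (i + m)) = c) (t : ℕ → G)
    (ht : ∀ k < n, (if k < i then s k else if k = i then c else s (k + n - 1)) = t k) :
    Comp n f s i = f t := by
  unfold Comp
  refine dep_apply hdep fun k hk => ?_
  rw [← ht k hk]
  split_ifs
  · rfl
  · exact hc
  · rfl

lemma left_neutral (hn : 3 ≤ n) (hdep : DepOn n f) (hassoc : Assoc n f) (hsol : Solvable n f)
    {a sa : G} (hsa : IsSkew n f a sa) (z : G) :
    f (fun k => if k = 0 then sa else if k = n - 1 then z else a) = z := by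
  set s : ℕ → G := fun k => if k = n - 1 then sa else if k = 2 * n - 2 then z else a with hs
  have c0 : Comp n f s 0 = f (Function.update (fun _ => a) (n - 1) z) := by
    refine comp_eq hdep s 0 a ?_ _ ?_
    · have h1 : f (fun m => s (0 + m)) = f (Function.update (fun _ => a) (n - 1) sa) := by
        refine dep_apply hdep fun k hk => ?_
        simp only [hs, Function.update_apply]
        split_ifs <;> first | rfl | omega
      rw [h1]; exact hsa
    · intro k hk
      simp only [hs, Function.update_apply]
      split_ifs <;> first | rfl | omega
  have c1 : Comp n f s (n - 1) = f (Function.update (fun _ => a) (n - 1)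
      (f (fun k => if k = 0 then sa else if k = n - 1 then z else a))) := by
    refine comp_eq hdep s (n - 1) (f (fun k => if k = 0 then sa else if k = n - 1 then z else a)) ?_ _ ?_
    · refine dep_apply hdep fun k hk => ?_
      simp only [hs]
      split_ifs <;> first | rfl | omega
    · intro k hk
      simp only [hs, Function.update_apply]
      split_ifs <;> first | rfl | omega
  have h01 := hassoc s 0 (n - 1) (by omega) (by omega)
  rw [c0, c1] at h01
  exact (cancel_at hsol (by omega : n - 1 < n) _ h01).symm

end Aux

theorem retracts_isomorphic {G : Type*} (n : ℕ) (hn : 3 ≤ n) (f : (ℕ → G) → G)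
    (hG : IsNAryGroup n f) (e p : G) (sk : G → G) (hsk : ∀ x, IsSkew n f x (sk x)) :
    let opE : G → G → G := fun x y => f (fun k => if k = 0 then x else if k = n - 1 then y else e)
    let opP : G → G → G := fun x y => f (fun k => if k = 0 then x else if k = n - 1 then y else p)
    let h : G → G := fun x => f (fun k => if k = n - 2 then x else if k = n - 1 then sk p else e)
    Function.Bijective h ∧ ∀ x y, h (opE x y) = opP (h x) (h y) := by
  obtain ⟨hdep, hassoc, hsol⟩ := hG
  intro opE opP h
  have hLN : ∀ z, f (fun k => if k = 0 then sk p else if k = n - 1 then z else p) = z :=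
    left_neutral hn hdep hassoc hsol (hsk p)
  have arg_eq : ∀ x : G, (fun k => if k = n - 2 then x else if k = n - 1 then sk p else e)
      = Function.update (fun k => if k = n - 1 then sk p else e) (n - 2) x := by
    intro x; funext k
    rw [Function.update_apply]
  have key : ∀ x : G, h x = f (Function.update (fun k => if k = n - 1 then sk p else e) (n - 2) x) :=
    fun x => congrArg f (arg_eq x)
  constructor
  · constructor
    · intro x y hxy
      rw [key x, key y] at hxy
      exact cancel_at hsol (by omega : n - 2 < n) _ hxy
    · intro w
      obtain ⟨z, hz, -⟩ := hsol (n - 2) (by omega) (fun k => if k = n - 1 then sk p else e) w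
      exact ⟨z, (key z).trans hz⟩
  · intro x y
    set s2 : ℕ → G := fun k => if k = n - 2 then x else if k = 2 * n - 3 then y
      else if k = 2 * n - 2 then sk p else e with hs2
    set w : ℕ → G := fun k => if k = n - 2 then x else if k = n - 1 then h y else e with hw
    have d2 : Comp n f s2 (n - 2) = h (opE x y) := by
      refine comp_eq hdep s2 (n - 2) (opE x y) ?_ _ ?_
      · refine dep_apply hdep fun k hk => ?_
        simp only [hs2]
        split_ifs <;> first | rfl | omega
      · intro k hk
        simp only [hs2]
        split_ifs <;> first | rfl | omega
    have d2' : Comp n f s2 (n - 1) = f w := by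
      refine comp_eq hdep s2 (n - 1) (h y) ?_ _ ?_
      · refine dep_apply hdep fun k hk => ?_
        simp only [hs2]
        split_ifs <;> first | rfl | omega
      · intro k hk
        simp only [hs2, hw]
        split_ifs <;> first | rfl | omega
    have e2 := hassoc s2 (n - 2) (n - 1) (by omega) (by omega)
    rw [d2, d2'] at e2
    set s1 : ℕ → G := fun k => if k < n - 2 then e else if k = n - 2 then x
      else if k = n - 1 then sk p else if k = 2 * n - 2 then h y else p with hs1
    have d1 : Comp n f s1 (n - 1) = f w := by
      refine comp_eq hdep s1 (n - 1) (h y) ?_ _ ?_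
      · have h1 : f (fun m => s1 (n - 1 + m))
            = f (fun k => if k = 0 then sk p else if k = n - 1 then h y else p) := by
          refine dep_apply hdep fun k hk => ?_
          simp only [hs1]
          split_ifs <;> first | rfl | omega
        exact h1.trans (hLN (h y))
      · intro k hk
        simp only [hs1, hw]
        split_ifs <;> first | rfl | omega
    have d0 : Comp n f s1 0 = opP (h x) (h y) := by
      refine comp_eq hdep s1 0 (h x) ?_ _ ?_
      · refine dep_apply hdep fun k hk => ?_
        simp only [hs1]
        split_ifs <;> first | rfl | omega
      · intro k hk
        simp only [hs1]
        split_ifs <;> first | rfl | omega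
    have e1 := hassoc s1 0 (n - 1) (by omega) (by omega)
    rw [d0, d1] at e1
    exact e2.trans e1.symm
end

section
/- Let (G,f) be an n-ary group, a ∈ G, and x an element of the centralizer C_G(a) = {x : f(x,a,x,...,x,x̄) = a}. Then for all nonnegative integers i, j, k with i + j + k = n − 2, f(x,...,x, a, x,...,x, x̄, x,...,x) = a, where a occurs after i copies of x and x̄ after j further copies of x, and similarly with the positions of a and x̄ exchanged. -/
open NAry

section Aux

variable {G : Type*}

/-- All-`x` sequence with `u` at position `p`. -/
def P1 (x u : G) (p : ℕ) : ℕ → G := fun m => if m = p then u else x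

/-- All-`x` sequence with `u` at position `p`, `v` at position `q`. -/
def P2 (x u v : G) (p q : ℕ) : ℕ → G :=
  fun m => if m = p then u else if m = q then v else x

theorem P1_update (x u : G) (p : ℕ) : P1 x u p = Function.update (fun _ => x) p u := by
  funext m
  simp [P1, Function.update_apply]

variable {n : ℕ} {f : (ℕ → G) → G}

theorem comp_eq_s12 (hdep : DepOn n f) (S : ℕ → G) (p : ℕ) {v : G}
    (hv : f (fun m => S (p + m)) = v) :
    Comp n f S p
      = f (fun k => if k < p then S k else if k = p then v else S (k + n - 1)) := by
  unfold Comp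
  apply hdep
  intro k _
  split_ifs with h1 h2
  · rfl
  · exact hv
  · rfl

theorem injP1 (hsolv : Solvable n f) (p : ℕ) (hp : p < n) (x : G) {u v : G}
    (h : f (P1 x u p) = f (P1 x v p)) : u = v := by
  rw [P1_update, P1_update] at h
  obtain ⟨z, _, huniq⟩ := hsolv p hp (fun _ => x) (f (Function.update (fun _ => x) p v))
  exact (huniq u h).trans (huniq v rfl).symm

/-- The skew element is neutral at every position: `f(x^p, sx, x^{n-1-p}) = x`. -/
theorem lemN (hn : 3 ≤ n) (hdep : DepOn n f) (hassoc : Assoc n f) (hsolv : Solvable n f)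
    (x sx : G) (hs : f (P1 x sx (n - 1)) = x) :
    ∀ p ≤ n - 1, f (P1 x sx p) = x := by
  have key : ∀ p ≤ n - 1, f (P1 x (f (P1 x sx p)) (n - 1)) = f (fun _ => x) := by
    intro p hp
    set S : ℕ → G := fun m => if m = n - 1 + p then sx else x with hS
    have hv1 : f (fun m => S (p + m)) = x := by
      have h1 : f (fun m => S (p + m)) = f (P1 x sx (n - 1)) :=
        hdep _ _ (by intro m hm; simp only [hS, P1]; split_ifs <;> first | rfl | omega)
      rw [h1, hs]
    have hv2 : f (fun m => S (n - 1 + m)) = f (P1 x sx p) :=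
      hdep _ _ (by intro m hm; simp only [hS, P1]; split_ifs <;> first | rfl | omega)
    have h := hassoc S p (n - 1) (by omega) (by omega)
    rw [comp_eq_s12 hdep S p hv1, comp_eq_s12 hdep S (n - 1) hv2] at h
    have e1 : f (fun k => if k < p then S k else if k = p then x else S (k + n - 1))
        = f (fun _ => x) :=
      hdep _ _ (by intro m hm; simp only [hS]; split_ifs <;> first | rfl | omega)
    have e2 : f (fun k => if k < n - 1 then S k else if k = n - 1 then f (P1 x sx p)
        else S (k + n - 1)) = f (P1 x (f (P1 x sx p)) (n - 1)) :=
      hdep _ _ (by intro m hm; simp only [hS, P1]; split_ifs <;> first | rfl | omega)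
    rw [e1, e2] at h
    exact h.symm
  intro p hp
  have h1 := key p hp
  have h2 := key (n - 1) le_rfl
  rw [hs] at h2
  exact injP1 hsolv (n - 1) (by omega) x (h1.trans h2.symm)

/-- `ρ(f(x^i, a, x^{q-i-1}, sx, x^{n-1-q})) = f(x^i, a, x^{n-1-i})`. -/
theorem moveA (hn : 3 ≤ n) (hdep : DepOn n f) (hassoc : Assoc n f)
    (x sx a : G) (hN0 : f (P1 x sx 0) = x)
    (i q : ℕ) (h1 : i < q) (h2 : q ≤ n - 1) :
    f (P1 x (f (P2 x a sx i q)) 0) = f (P1 x a i) := by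
  set S : ℕ → G := fun m => if m = i then a else if m = q then sx else x with hS
  have hv1 : f (fun m => S (0 + m)) = f (P2 x a sx i q) :=
    hdep _ _ (by intro m hm; simp only [hS, P2]; split_ifs <;> first | rfl | omega)
  have hv2 : f (fun m => S (q + m)) = x := by
    have h : f (fun m => S (q + m)) = f (P1 x sx 0) :=
      hdep _ _ (by intro m hm; simp only [hS, P1]; split_ifs <;> first | rfl | omega)
    rw [h, hN0]
  have h := hassoc S 0 q (by omega) (by omega)
  rw [comp_eq_s12 hdep S 0 hv1, comp_eq_s12 hdep S q hv2] at h
  have e1 : f (fun k => if k < 0 then S k else if k = 0 then f (P2 x a sx i q)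
      else S (k + n - 1)) = f (P1 x (f (P2 x a sx i q)) 0) :=
    hdep _ _ (by intro m hm; simp only [hS, P1]; split_ifs <;> first | rfl | omega)
  have e2 : f (fun k => if k < q then S k else if k = q then x else S (k + n - 1))
      = f (P1 x a i) :=
    hdep _ _ (by intro m hm; simp only [hS, P1]; split_ifs <;> first | rfl | omega)
  rw [e1, e2] at h
  exact h

/-- `λ(f(x^i, sx, x^{q-i-1}, a, x^{n-1-q})) = f(x^q, a, x^{n-1-q})`. -/
theorem moveB (hn : 3 ≤ n) (hdep : DepOn n f) (hassoc : Assoc n f)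
    (x sx a : G) (hskew : f (P1 x sx (n - 1)) = x)
    (i q : ℕ) (h1 : i < q) (h2 : q ≤ n - 1) :
    f (P1 x (f (P2 x sx a i q)) (n - 1)) = f (P1 x a q) := by
  set S : ℕ → G := fun m => if m = n - 1 + i then sx else if m = n - 1 + q then a else x with hS
  have hv1 : f (fun m => S (i + m)) = x := by
    have h : f (fun m => S (i + m)) = f (P1 x sx (n - 1)) :=
      hdep _ _ (by intro m hm; simp only [hS, P1]; split_ifs <;> first | rfl | omega)
    rw [h, hskew]
  have hv2 : f (fun m => S (n - 1 + m)) = f (P2 x sx a i q) :=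
    hdep _ _ (by intro m hm; simp only [hS, P2]; split_ifs <;> first | rfl | omega)
  have h := hassoc S i (n - 1) (by omega) (by omega)
  rw [comp_eq_s12 hdep S i hv1, comp_eq_s12 hdep S (n - 1) hv2] at h
  have e1 : f (fun k => if k < i then S k else if k = i then x else S (k + n - 1))
      = f (P1 x a q) :=
    hdep _ _ (by intro m hm; simp only [hS, P1]; split_ifs <;> first | rfl | omega)
  have e2 : f (fun k => if k < n - 1 then S k else if k = n - 1 then f (P2 x sx a i q)
      else S (k + n - 1)) = f (P1 x (f (P2 x sx a i q)) (n - 1)) :=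
    hdep _ _ (by intro m hm; simp only [hS, P1, P2]; split_ifs <;> first | rfl | omega)
  rw [e1, e2] at h
  exact h.symm

/-- Shifting `a` one step to the right. -/
theorem moveC (hn : 3 ≤ n) (hdep : DepOn n f) (hassoc : Assoc n f)
    (x sx a : G) (hNm : ∀ p ≤ n - 1, f (P1 x sx p) = x)
    (m : ℕ) (hm : m + 4 ≤ n) :
    f (P2 x a sx (m + 1) (n - 1))
      = f (P2 x (f (P2 x a sx m (n - 1))) sx 1 (n - 1)) := by
  set S : ℕ → G := fun t => if t = m + 1 then a else if t = n then sx
    else if t = 2 * n - 2 then sx else x with hS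
  have hv1 : f (fun t => S (1 + t)) = f (P2 x a sx m (n - 1)) :=
    hdep _ _ (by intro t ht; simp only [hS, P2]; split_ifs <;> first | rfl | omega)
  have hv2 : f (fun t => S (m + 2 + t)) = x := by
    have h : f (fun t => S (m + 2 + t)) = f (P1 x sx (n - 2 - m)) :=
      hdep _ _ (by intro t ht; simp only [hS, P1]; split_ifs <;> first | rfl | omega)
    rw [h, hNm (n - 2 - m) (by omega)]
  have h := hassoc S 1 (m + 2) (by omega) (by omega)
  rw [comp_eq_s12 hdep S 1 hv1, comp_eq_s12 hdep S (m + 2) hv2] at h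
  have e1 : f (fun k => if k < 1 then S k else if k = 1 then f (P2 x a sx m (n - 1))
      else S (k + n - 1)) = f (P2 x (f (P2 x a sx m (n - 1))) sx 1 (n - 1)) :=
    hdep _ _ (by intro t ht; simp only [hS, P2]; split_ifs <;> first | rfl | omega)
  have e2 : f (fun k => if k < m + 2 then S k else if k = m + 2 then x else S (k + n - 1))
      = f (P2 x a sx (m + 1) (n - 1)) :=
    hdep _ _ (by intro t ht; simp only [hS, P2]; split_ifs <;> first | rfl | omega)
  rw [e1, e2] at h
  exact h.symm

/-- Shifting `a` around the leading `sx`. -/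
theorem moveD (hn : 3 ≤ n) (hdep : DepOn n f) (hassoc : Assoc n f)
    (x sx a : G) (i : ℕ) (hi : i ≤ n - 3) :
    f (P2 x sx (f (P2 x a sx i (i + 2))) 0 (n - 2))
      = f (P2 x sx (f (P2 x a sx (n - 3) (n - 1))) 0 (i + 1)) := by
  set S : ℕ → G := fun t => if t = 0 then sx else if t = n - 2 + i then a
    else if t = n + i then sx else x with hS
  have hv1 : f (fun t => S (n - 2 + t)) = f (P2 x a sx i (i + 2)) :=
    hdep _ _ (by intro t ht; simp only [hS, P2]; split_ifs <;> first | rfl | omega)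
  have hv2 : f (fun t => S (i + 1 + t)) = f (P2 x a sx (n - 3) (n - 1)) :=
    hdep _ _ (by intro t ht; simp only [hS, P2]; split_ifs <;> first | rfl | omega)
  have h := hassoc S (n - 2) (i + 1) (by omega) (by omega)
  rw [comp_eq_s12 hdep S (n - 2) hv1, comp_eq_s12 hdep S (i + 1) hv2] at h
  have e1 : f (fun k => if k < n - 2 then S k else if k = n - 2 then f (P2 x a sx i (i + 2))
      else S (k + n - 1)) = f (P2 x sx (f (P2 x a sx i (i + 2))) 0 (n - 2)) :=
    hdep _ _ (by intro t ht; simp only [hS, P2]; split_ifs <;> first | rfl | omega)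
  have e2 : f (fun k => if k < i + 1 then S k else if k = i + 1
      then f (P2 x a sx (n - 3) (n - 1)) else S (k + n - 1))
      = f (P2 x sx (f (P2 x a sx (n - 3) (n - 1))) 0 (i + 1)) :=
    hdep _ _ (by intro t ht; simp only [hS, P2]; split_ifs <;> first | rfl | omega)
  rw [e1, e2] at h
  exact h

/-- `ρ(f(x^i, sx, …, a, …)) = f(x^i, f(sx, x^{q-i-1}, a, x^{n-1-q+i}), x^{n-1-i})`. -/
theorem moveE (hn : 3 ≤ n) (hdep : DepOn n f) (hassoc : Assoc n f)
    (x sx a : G) (i q : ℕ) (h1 : i < q) (h2 : q ≤ n - 1) :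
    f (P1 x (f (P2 x sx a i q)) 0) = f (P1 x (f (P2 x sx a 0 (q - i))) i) := by
  set S : ℕ → G := fun t => if t = i then sx else if t = q then a else x with hS
  have hv1 : f (fun t => S (0 + t)) = f (P2 x sx a i q) :=
    hdep _ _ (by intro t ht; simp only [hS, P2]; split_ifs <;> first | rfl | omega)
  have hv2 : f (fun t => S (i + t)) = f (P2 x sx a 0 (q - i)) :=
    hdep _ _ (by intro t ht; simp only [hS, P2]; split_ifs <;> first | rfl | omega)
  have h := hassoc S 0 i (by omega) (by omega)
  rw [comp_eq_s12 hdep S 0 hv1, comp_eq_s12 hdep S i hv2] at h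
  have e1 : f (fun k => if k < 0 then S k else if k = 0 then f (P2 x sx a i q)
      else S (k + n - 1)) = f (P1 x (f (P2 x sx a i q)) 0) :=
    hdep _ _ (by intro t ht; simp only [hS, P1]; split_ifs <;> first | rfl | omega)
  have e2 : f (fun k => if k < i then S k else if k = i then f (P2 x sx a 0 (q - i))
      else S (k + n - 1)) = f (P1 x (f (P2 x sx a 0 (q - i))) i) :=
    hdep _ _ (by intro t ht; simp only [hS, P1]; split_ifs <;> first | rfl | omega)
  rw [e1, e2] at h
  exact h

end Aux

theorem centralizer_identities {G : Type*} (n : ℕ) (hn : 3 ≤ n) (f : (ℕ → G) → G)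
    (hG : IsNAryGroup n f) (x a sx : G) (hs : IsSkew n f x sx)
    (hx : f (fun k => if k = 1 then a else if k = n - 1 then sx else x) = a)
    (i j k : ℕ) (hijk : i + j + k = n - 2) :
    f (fun m => if m = i then a else if m = i + j + 1 then sx else x) = a ∧
    f (fun m => if m = i then sx else if m = i + j + 1 then a else x) = a := by
  obtain ⟨hdep, hassoc, hsolv⟩ := hG
  have hskew : f (P1 x sx (n - 1)) = x := by
    rw [P1_update]; exact hs
  have hx' : f (P2 x a sx 1 (n - 1)) = a := hx
  have hN := lemN hn hdep hassoc hsolv x sx hskew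
  have hN0 : f (P1 x sx 0) = x := hN 0 (by omega)
  have hFdep : ∀ i' q q', i' < q → q ≤ n - 1 → i' < q' → q' ≤ n - 1 →
      f (P2 x a sx i' q) = f (P2 x a sx i' q') := by
    intro i' q q' h1 h2 h3 h4
    have e1 := moveA hn hdep hassoc x sx a hN0 i' q h1 h2
    have e2 := moveA hn hdep hassoc x sx a hN0 i' q' h3 h4
    exact injP1 hsolv 0 (by omega) x (e1.trans e2.symm)
  have hcan : ∀ i', i' ≤ n - 3 → f (P2 x a sx i' (n - 1)) = a := by
    intro i'
    induction i' with
    | zero =>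
      intro _
      have h := moveA hn hdep hassoc x sx a hN0 0 (n - 1) (by omega) le_rfl
      exact injP1 hsolv 0 (by omega) x h
    | succ m ih =>
      intro hm
      have hC := moveC hn hdep hassoc x sx a hN m (by omega)
      rw [ih (by omega), hx'] at hC
      exact hC
  have hva : f (P1 x a 0) = f (P1 x a 1) := by
    have h := moveA hn hdep hassoc x sx a hN0 1 (n - 1) (by omega) le_rfl
    rw [hx'] at h
    exact h
  have hF'n1 : ∀ i', i' < n - 1 → f (P2 x sx a i' (n - 1)) = a := by
    intro i' hi'
    have h := moveB hn hdep hassoc x sx a hskew i' (n - 1) hi' le_rfl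
    exact injP1 hsolv (n - 1) (by omega) x h
  have hV : f (P2 x sx a 0 (n - 2)) = a := by
    have hE := moveE hn hdep hassoc x sx a 1 (n - 1) (by omega) le_rfl
    have e : n - 1 - 1 = n - 2 := by omega
    rw [e, hF'n1 1 (by omega), hva] at hE
    exact (injP1 hsolv 1 (by omega) x hE).symm
  have hF'q : ∀ q, 1 ≤ q → q ≤ n - 2 → f (P2 x sx a 0 q) = a := by
    intro q h1 h2
    have hD := moveD hn hdep hassoc x sx a (q - 1) (by omega)
    have e1 : f (P2 x a sx (q - 1) (q - 1 + 2)) = a := by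
      rw [hFdep (q - 1) (q - 1 + 2) (n - 1) (by omega) (by omega) (by omega) le_rfl]
      exact hcan (q - 1) (by omega)
    have e2 : f (P2 x a sx (n - 3) (n - 1)) = a := hcan (n - 3) le_rfl
    rw [e1, e2] at hD
    have e3 : q - 1 + 1 = q := by omega
    rw [e3] at hD
    rw [← hD]
    exact hV
  have hlam : ∀ q, 1 ≤ q → q ≤ n - 2 → f (P1 x a q) = f (P1 x a (n - 1)) := by
    intro q h1 h2
    have hB := moveB hn hdep hassoc x sx a hskew 0 q (by omega) (by omega)
    rw [hF'q q h1 h2] at hB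
    exact hB.symm
  have hlast : f (P2 x a sx (n - 2) (n - 1)) = a := by
    have h := moveA hn hdep hassoc x sx a hN0 (n - 2) (n - 1) (by omega) le_rfl
    rw [hlam (n - 2) (by omega) le_rfl, ← hlam 1 (by omega) (by omega), ← hva] at h
    exact injP1 hsolv 0 (by omega) x h
  constructor
  · show f (P2 x a sx i (i + j + 1)) = a
    rw [hFdep i (i + j + 1) (n - 1) (by omega) (by omega) (by omega) le_rfl]
    rcases Nat.lt_or_ge i (n - 2) with h | h
    · exact hcan i (by omega)
    · have e : i = n - 2 := by omega
      rw [e]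
      exact hlast
  · show f (P2 x sx a i (i + j + 1)) = a
    have hB := moveB hn hdep hassoc x sx a hskew i (i + j + 1) (by omega) (by omega)
    have e : f (P1 x a (i + j + 1)) = f (P1 x a (n - 1)) := by
      rcases Nat.lt_or_ge (i + j + 1) (n - 1) with h | h
      · exact hlam (i + j + 1) (by omega) (by omega)
      · have e2 : i + j + 1 = n - 1 := by omega
        rw [e2]
    rw [e] at hB
    exact injP1 hsolv (n - 1) (by omega) x hB
end
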